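/- Let X₁,...,X_n be independent square-integrable random variables, each taking values in the lattice {v₀ + Dk : k ∈ ℤ}. Then Var(X₁ + ... + X_n) ≥ (D²/4)·Σ_{j=1}^n θ_{X_j}, where θ_{X_j} = Σ_{k∈ℤ} min(P(X_j = v₀+Dk), P(X_j = v₀+D(k+1))). -/

import Mathlib

open MeasureTheory

private lemma variance_ge_theta {Ω : Type*} [MeasurableSpace Ω] (P : Measure Ω)
    [IsProbabilityMeasure P] (X : Ω → ℝ) (hm : Measurable X) (hL2 : MemLp X 2 P)
    (v₀ D : ℝ) (hD : 0 < D) :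
    D ^ 2 / 4 * ∑' k : ℤ, min (P {ω | X ω = v₀ + D * k}).toReal
        (P {ω | X ω = v₀ + D * (k + 1)}).toReal ≤ ProbabilityTheory.variance X P := by
  set μ := ∫ ω, X ω ∂P with hμ
  set A : ℤ → Set Ω := fun k => X ⁻¹' {v₀ + D * k} with hA
  have hAmeas : ∀ k, MeasurableSet (A k) := fun k => hm (measurableSet_singleton _)
  have hAeq : ∀ k : ℤ, {ω | X ω = v₀ + D * k} = A k := fun k => rfl
  have hAeq2 : ∀ k : ℤ, {ω | X ω = v₀ + D * ((k : ℝ) + 1)} = A (k + 1) := by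
    intro k
    rw [hA]
    push_cast
    rfl
  set p : ℤ → ℝ := fun k => (P (A k)).toReal with hp
  have hdisj : Pairwise (Function.onFun Disjoint A) := by
    intro i j hij
    simp only [Function.onFun, hA, Set.disjoint_left]
    intro ω h1 h2
    simp only [Set.mem_preimage, Set.mem_singleton_iff] at h1 h2
    apply hij
    have : D * (i : ℝ) = D * (j : ℝ) := by linarith [h1, h2]
    exact_mod_cast mul_left_cancel₀ hD.ne' this
  -- summability of p
  have hpsum : Summable p := by
    have h1 : ∑' k, P (A k) ≤ P Set.univ :=
      tsum_measure_le_measure_univ (fun k => (hAmeas k).nullMeasurableSet)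
        (hdisj.mono fun i j h => h.aedisjoint)
    have h2 : ∑' k, P (A k) ≠ ⊤ := by
      refine ne_top_of_le_ne_top ?_ h1
      simp [measure_univ]
    exact ENNReal.summable_toReal h2
  -- the function f
  set f : Ω → ℝ := fun ω => (X ω - μ) ^ 2 with hf
  have hfint : Integrable f P := by
    have : MemLp (fun ω => X ω - μ) 2 P := hL2.sub (memLp_const μ)
    have := this.integrable_sq
    simpa [hf] using this
  have hfnn : ∀ ω, 0 ≤ f ω := fun ω => sq_nonneg _
  -- variance equality
  have hvar : ProbabilityTheory.variance X P = ∫ ω, f ω ∂P := by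
    rw [ProbabilityTheory.variance_eq_integral hm.aemeasurable]
  -- key: finite partial sums of weighted p are ≤ ∫ f
  have key : ∀ t : Finset ℤ, ∑ j ∈ t, p j * (v₀ + D * j - μ) ^ 2 ≤ ∫ ω, f ω ∂P := by
    intro t
    have heval : ∀ j ∈ t, ∫ ω in A j, f ω ∂P = p j * (v₀ + D * j - μ) ^ 2 := by
      intro j _
      have : ∫ ω in A j, f ω ∂P = ∫ _ω in A j, (v₀ + D * j - μ) ^ 2 ∂P := by
        apply setIntegral_congr_fun (hAmeas j)
        intro ω hω
        simp only [Set.mem_preimage, Set.mem_singleton_iff, hA] at hω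
        simp [hf, hω]
      rw [this, setIntegral_const, smul_eq_mul]; rfl
    calc ∑ j ∈ t, p j * (v₀ + D * j - μ) ^ 2
        = ∑ j ∈ t, ∫ ω in A j, f ω ∂P := by
          exact (Finset.sum_congr rfl heval).symm
      _ = ∫ ω in ⋃ j ∈ t, A j, f ω ∂P := by
          exact (integral_biUnion_finset t (fun j _ => hAmeas j)
            (hdisj.set_pairwise _) (fun j _ => hfint.integrableOn)).symm
      _ ≤ ∫ ω, f ω ∂P :=
          setIntegral_le_integral hfint (Filter.Eventually.of_forall hfnn)
  -- the near point k₀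
  set k₀ : ℤ := round ((μ - v₀) / D) with hk₀
  have hfar : ∀ j : ℤ, j ≠ k₀ → D ^ 2 / 4 ≤ (v₀ + D * j - μ) ^ 2 := by
    intro j hj
    have h1 : |(μ - v₀) / D - k₀| ≤ 1 / 2 := abs_sub_round _
    have h2 : (1 : ℝ) ≤ |(j : ℝ) - k₀| := by
      rw [← Int.cast_sub, ← Int.cast_abs]
      exact_mod_cast Int.one_le_abs (sub_ne_zero.mpr hj)
    have h3 : (1 / 2 : ℝ) ≤ |(j : ℝ) - (μ - v₀) / D| := by
      calc (1 / 2 : ℝ) = 1 - 1/2 := by norm_num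
        _ ≤ |(j : ℝ) - k₀| - |(μ - v₀) / D - k₀| := by linarith
        _ ≤ |(j : ℝ) - k₀ - ((μ - v₀) / D - k₀)| := abs_sub_abs_le_abs_sub _ _
        _ = |(j : ℝ) - (μ - v₀) / D| := by congr 1; ring
    have h4 : D / 2 ≤ |v₀ + D * j - μ| := by
      have heq : v₀ + D * j - μ = D * ((j : ℝ) - (μ - v₀) / D) := by
        field_simp
        ring
      rw [heq, abs_mul, abs_of_pos hD]
      calc D / 2 = D * (1 / 2) := by ring
        _ ≤ D * |(j : ℝ) - (μ - v₀) / D| := by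
            exact mul_le_mul_of_nonneg_left h3 hD.le
    calc D ^ 2 / 4 = (D / 2) ^ 2 := by ring
      _ ≤ |v₀ + D * j - μ| ^ 2 := by
          apply sq_le_sq' <;> nlinarith [abs_nonneg (v₀ + D * j - μ)]
      _ = (v₀ + D * j - μ) ^ 2 := sq_abs _
  -- injective map avoiding k₀
  set m : ℤ → ℤ := fun k => if k₀ ≤ k then k + 1 else k with hmdef
  have hminj : Function.Injective m := by
    intro a b hab
    simp only [hmdef] at hab
    split_ifs at hab <;> omega
  have hmne : ∀ k, m k ≠ k₀ := by
    intro k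
    simp only [hmdef]
    split_ifs <;> omega
  -- term-wise bound
  have hterm : ∀ k : ℤ, D ^ 2 / 4 * min (p k) (p (k + 1)) ≤ p (m k) * (v₀ + D * (m k) - μ) ^ 2 := by
    intro k
    have hple : min (p k) (p (k + 1)) ≤ p (m k) := by
      simp only [hmdef]
      split_ifs
      · exact min_le_right _ _
      · exact min_le_left _ _
    have hnn : 0 ≤ min (p k) (p (k + 1)) :=
      le_min ENNReal.toReal_nonneg ENNReal.toReal_nonneg
    calc D ^ 2 / 4 * min (p k) (p (k + 1))
        ≤ (v₀ + D * (m k) - μ) ^ 2 * min (p k) (p (k + 1)) :=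
          mul_le_mul_of_nonneg_right (hfar _ (hmne k)) hnn
      _ ≤ (v₀ + D * (m k) - μ) ^ 2 * p (m k) :=
          mul_le_mul_of_nonneg_left hple (sq_nonneg _)
      _ = p (m k) * (v₀ + D * (m k) - μ) ^ 2 := mul_comm _ _
  -- summability of the min function
  have hminsum : Summable (fun k : ℤ => min (p k) (p (k + 1))) := by
    apply Summable.of_nonneg_of_le (fun k => le_min ENNReal.toReal_nonneg ENNReal.toReal_nonneg)
      (fun k => min_le_left _ _) hpsum
  -- put it together
  rw [hvar]
  have : ∀ s : Finset ℤ, ∑ k ∈ s, D ^ 2 / 4 * min (p k) (p (k + 1)) ≤ ∫ ω, f ω ∂P := by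
    intro s
    calc ∑ k ∈ s, D ^ 2 / 4 * min (p k) (p (k + 1))
        ≤ ∑ k ∈ s, p (m k) * (v₀ + D * (m k) - μ) ^ 2 :=
          Finset.sum_le_sum fun k _ => hterm k
      _ = ∑ j ∈ s.image m, p j * (v₀ + D * j - μ) ^ 2 := by
          rw [Finset.sum_image (fun a _ b _ h => hminj h)]
      _ ≤ ∫ ω, f ω ∂P := key _
  have htsum : ∑' k : ℤ, D ^ 2 / 4 * min (p k) (p (k + 1)) ≤ ∫ ω, f ω ∂P := by
    apply Summable.tsum_le_of_sum_le (hminsum.mul_left _) this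
  calc D ^ 2 / 4 * ∑' k : ℤ, min (P {ω | X ω = v₀ + D * k}).toReal
        (P {ω | X ω = v₀ + D * (k + 1)}).toReal
      = ∑' k : ℤ, D ^ 2 / 4 * min (p k) (p (k + 1)) := by
        rw [tsum_mul_left]
        congr 1
        exact tsum_congr fun k => by rw [hAeq k, hAeq2 k]
    _ ≤ ∫ ω, f ω ∂P := htsum

theorem variance_sum_ge_theta_sum {Ω : Type*} [MeasurableSpace Ω] (P : Measure Ω)
    [IsProbabilityMeasure P] (n : ℕ) (X : Fin n → Ω → ℝ) (hmeas : ∀ j, Measurable (X j))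
    (hindep : ProbabilityTheory.iIndepFun X P)
    (hL2 : ∀ j, MemLp (X j) 2 P) (v₀ D : ℝ) (hD : 0 < D)
    (hlat : ∀ j, P {ω | ∃ k : ℤ, X j ω = v₀ + D * k} = 1) :
    ProbabilityTheory.variance (fun ω => ∑ j, X j ω) P ≥
      D ^ 2 / 4 * ∑ j, ∑' k : ℤ, min (P {ω | X j ω = v₀ + D * k}).toReal
        (P {ω | X j ω = v₀ + D * (k + 1)}).toReal := by
  have hfun : (fun ω => ∑ j, X j ω) = ∑ j, X j := by
    funext ω; simp
  rw [hfun, ProbabilityTheory.IndepFun.variance_sum (fun j _ => hL2 j)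
    (fun i _ j _ hij => hindep.indepFun hij)]
  rw [Finset.mul_sum]
  exact Finset.sum_le_sum fun j _ =>
    variance_ge_theta P (X j) (hmeas j) (hL2 j) v₀ D hD
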